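/- For every integer n ≥ 1 and every permutation σ of {1,…,n}, the images of the monomials x_{σ(1)}^{a_1}·x_{σ(2)}^{a_2}⋯x_{σ(n−1)}^{a_{n−1}} with 0 ≤ a_i ≤ n−i for each 1 ≤ i ≤ n−1 form a basis of the quotient ring ℤ[x_1,…,x_n]/(h_1,…,h_n) as a ℤ-module. -/

import Mathlib

open MvPolynomial

/-- `hpoly n a b` is the sum of all monomials of degree `a` in the first `b`
variables `x_1, …, x_b` of `ℤ[x_1,…,x_n]`: the complete homogeneous symmetric
polynomial `h_a^b`; `h_a = hpoly n a n`. -/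
noncomputable def hpoly (n a b : ℕ) : MvPolynomial (Fin n) ℤ :=
  ∑ μ ∈ Finset.univ.filter (fun μ : Sym (Fin n) a => ∀ i ∈ μ.1, (i : ℕ) < b),
    (μ.1.map X).prod

/-- Sum of all monomials of degree `a` in the variables with index `≥ b`. -/
noncomputable def qpoly (m a b : ℕ) : MvPolynomial (Fin m) ℤ :=
  ∑ μ ∈ Finset.univ.filter (fun μ : Sym (Fin m) a => ∀ i ∈ μ.1, b ≤ (i : ℕ)),
    (μ.1.map X).prod

lemma qpoly_zero (m b : ℕ) : qpoly m 0 b = 1 := by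
  rw [qpoly]
  have h1 : Finset.univ.filter (fun μ : Sym (Fin m) 0 => ∀ i ∈ μ.1, b ≤ (i : ℕ))
      = {(Sym.nil : Sym (Fin m) 0)} := by
    apply Finset.eq_singleton_iff_unique_mem.mpr
    constructor
    · exact Finset.mem_filter.mpr ⟨Finset.mem_univ _, by simp [Sym.nil]⟩
    · intro s _
      exact Subtype.ext (Multiset.card_eq_zero.mp s.2)
  rw [h1, Finset.sum_singleton]
  simp [Sym.nil]

lemma hpoly_eq_qpoly (n a : ℕ) : hpoly n a n = qpoly n a 0 := by
  rw [hpoly, qpoly]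
  congr 1
  ext μ
  simp [Fin.isLt]

lemma qpoly_rec (m a b : ℕ) (hb : b < m) :
    qpoly m (a+1) b = qpoly m (a+1) (b+1) + X ⟨b, hb⟩ * qpoly m a b := by
  classical
  set bv : Fin m := ⟨b, hb⟩
  rw [qpoly, ← Finset.sum_filter_add_sum_filter_not _ (fun μ : Sym (Fin m) (a+1) => bv ∈ μ)]
  rw [add_comm]
  congr 1
  · -- those not containing bv
    rw [qpoly]
    congr 1
    ext μ
    simp only [Finset.mem_filter, Finset.mem_univ, true_and]
    constructor
    · rintro ⟨h1, h2⟩ i hi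
      rcases Nat.lt_or_ge b (i : ℕ) with h | h
      · exact h
      · exact absurd (show i = bv from Fin.ext (le_antisymm h (h1 i hi))) (fun e => h2 (e ▸ hi))
    · intro h
      refine ⟨fun i hi => le_of_lt (h i hi), fun hmem => ?_⟩
      exact absurd (h bv hmem) (by simp [bv])
  · -- those containing bv
    rw [qpoly, Finset.mul_sum]
    refine (Finset.sum_bij (i := fun (ν : Sym (Fin m) a) _ => bv ::ₛ ν) ?_ ?_ ?_ ?_).symm
    · intro ν hν
      simp only [Finset.mem_filter, Finset.mem_univ, true_and] at hν ⊢
      refine ⟨fun i hi => ?_, Sym.mem_cons_self _ _⟩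
      rcases Sym.mem_cons.mp hi with h | h
      · exact le_of_eq (congrArg Fin.val h).symm
      · exact hν i h
    · intro ν₁ h₁ ν₂ h₂ h
      exact (Sym.cons_inj_right _ _ _).mp h
    · intro μ hμ
      simp only [Finset.mem_filter, Finset.mem_univ, true_and] at hμ
      refine ⟨μ.erase bv hμ.2, Finset.mem_filter.mpr ⟨Finset.mem_univ _, fun i hi => hμ.1 i ?_⟩,
        Sym.cons_erase hμ.2⟩
      have h2 : i ∈ (μ : Multiset (Fin m)).erase bv := hi
      exact Multiset.mem_of_mem_erase h2
    · intro ν hν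
      show X bv * (Multiset.map X (ν : Multiset (Fin m))).prod = (Multiset.map X ((bv ::ₛ ν : Sym (Fin m) (a+1)) : Multiset (Fin m))).prod
      rw [Sym.coe_cons, Multiset.map_cons, Multiset.prod_cons]

lemma qpoly_rename (m a b : ℕ) :
    qpoly (m+1) a (b+1) = rename Fin.succ (qpoly m a b) := by
  classical
  rw [qpoly, qpoly, map_sum]
  refine (Finset.sum_bij (i := fun (ν : Sym (Fin m) a) _ => ν.map Fin.succ) ?_ ?_ ?_ ?_).symm
  · intro ν hν
    simp only [Finset.mem_filter, Finset.mem_univ, true_and] at hν ⊢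
    intro i hi
    obtain ⟨j, hj, rfl⟩ := Sym.mem_map.mp hi
    simpa using Nat.succ_le_succ (hν j hj)
  · intro ν₁ h₁ ν₂ h₂ h
    exact Sym.map_injective (Fin.succ_injective m) _ h
  · intro μ hμ
    simp only [Finset.mem_filter, Finset.mem_univ, true_and] at hμ
    have hne : ∀ i ∈ μ, i ≠ (0 : Fin (m+1)) := by
      intro i hi h0
      have := hμ i hi
      rw [h0] at this
      simpa using this
    refine ⟨μ.attach.map (fun i => i.1.pred (hne i.1 i.2)),
      Finset.mem_filter.mpr ⟨Finset.mem_univ _, ?_⟩, ?_⟩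
    · intro i hi
      obtain ⟨j, hj, rfl⟩ := Sym.mem_map.mp hi
      have hbj := hμ j.1 j.2
      have : (j.1.pred (hne j.1 j.2) : ℕ) = (j.1 : ℕ) - 1 := rfl
      omega
    · show Sym.map Fin.succ (μ.attach.map (fun i => i.1.pred (hne i.1 i.2))) = μ
      rw [Sym.map_map]
      have : Sym.map (Fin.succ ∘ fun i : {x // x ∈ μ} => i.1.pred (hne i.1 i.2)) μ.attach
          = Sym.map (fun i : {x // x ∈ μ} => (i : Fin (m+1))) μ.attach := by
        apply Sym.map_congr
        intro x hx
        simp [Fin.succ_pred]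
      rw [this, Sym.attach_map_coe]
  · intro ν hν
    show (rename Fin.succ) ((Multiset.map X (ν : Multiset (Fin m))).prod)
        = (Multiset.map X ((ν.map Fin.succ : Sym (Fin (m+1)) a) : Multiset (Fin (m+1)))).prod
    rw [← Multiset.prod_hom _ (rename (R := ℤ) Fin.succ), Multiset.map_map]
    have hc : ((ν.map Fin.succ : Sym (Fin (m+1)) a) : Multiset (Fin (m+1)))
        = (ν : Multiset (Fin m)).map Fin.succ := rfl
    rw [hc, Multiset.map_map]
    congr 1
    ext j
    simp [rename_X]

lemma hpoly_full (n a : ℕ) : hpoly n a n = MvPolynomial.hsymm (Fin n) ℤ a := by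
  rw [hpoly, MvPolynomial.hsymm, Finset.filter_true_of_mem (fun μ _ => fun i _ => i.isLt)]

lemma rename_hpoly (n a : ℕ) (π : Equiv.Perm (Fin n)) :
    rename π (hpoly n a n) = hpoly n a n := by
  rw [hpoly_full, rename_hsymm]

lemma finSuccEquiv_rename_succ (m : ℕ) (p : MvPolynomial (Fin m) ℤ) :
    finSuccEquiv ℤ m (rename Fin.succ p) = Polynomial.C p := by
  induction p using MvPolynomial.induction_on with
  | C a => simp
  | add p q hp hq => simp [hp, hq]
  | mul_X p i hp => rw [map_mul, rename_X, map_mul, hp, finSuccEquiv_X_succ, ← Polynomial.C_mul]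

lemma qpoly_finSuccEquiv (m k : ℕ) :
    ((finSuccEquiv ℤ m) (qpoly (m+1) k 0)).Monic ∧
      ((finSuccEquiv ℤ m) (qpoly (m+1) k 0)).natDegree = k := by
  induction k with
  | zero => rw [qpoly_zero, map_one]; exact ⟨Polynomial.monic_one, Polynomial.natDegree_one⟩
  | succ k ih =>
    rw [qpoly_rec (m+1) k 0 (Nat.succ_pos m), map_add, map_mul,
      show ((0:ℕ)+1) = 0+1 from rfl, qpoly_rename m (k+1) 0, finSuccEquiv_rename_succ]
    have h0 : (finSuccEquiv ℤ m) (X (⟨0, Nat.succ_pos m⟩ : Fin (m+1))) = Polynomial.X := by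
      have : (⟨0, Nat.succ_pos m⟩ : Fin (m+1)) = 0 := rfl
      rw [this, finSuccEquiv_X_zero]
    rw [h0]
    set f := (finSuccEquiv ℤ m) (qpoly (m+1) k 0)
    have hm : (Polynomial.X * f).Monic := Polynomial.monic_X.mul ih.1
    have hd : (Polynomial.X * f).natDegree = k + 1 := by
      rw [Polynomial.Monic.natDegree_mul Polynomial.monic_X ih.1, Polynomial.natDegree_X, ih.2,
        add_comm]
    have hdegpos : 0 < (Polynomial.X * f).degree :=
      Polynomial.natDegree_pos_iff_degree_pos.mp (by omega)
    have hlt : (Polynomial.C (qpoly m (k+1) 0)).degree < (Polynomial.X * f).degree :=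
      lt_of_le_of_lt Polynomial.degree_C_le hdegpos
    refine ⟨hm.add_of_right hlt, ?_⟩
    rw [Polynomial.natDegree_add_eq_right_of_natDegree_lt, hd]
    rw [hd, Polynomial.natDegree_C]
    omega

set_option maxHeartbeats 2000000 in
set_option synthInstance.maxHeartbeats 400000 in
theorem aux (m : ℕ) : ∀ (k : ℕ),
    ∃ b : Module.Basis {a : Fin m → ℕ // ∀ j : Fin m, a j < k + (j : ℕ) + 1} ℤ
        (MvPolynomial (Fin m) ℤ ⧸
          Ideal.span (Set.range (fun j : Fin m => qpoly m (k + (j : ℕ) + 1) (j : ℕ)))),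
      ∀ a, b a = Ideal.Quotient.mk _ (∏ j, X j ^ a.1 j) := by
  induction m with
  | zero =>
    intro k
    set I := Ideal.span (Set.range (fun j : Fin 0 => qpoly 0 (k + (j : ℕ) + 1) (j : ℕ))) with hI
    haveI : Unique {a : Fin 0 → ℕ // ∀ j : Fin 0, a j < k + (j : ℕ) + 1} :=
      ⟨⟨⟨fun j => j.elim0, fun j => j.elim0⟩⟩, fun x => Subtype.ext (funext fun j => j.elim0)⟩
    have hbij : Function.Bijective ((Ideal.Quotient.mk I).comp (C : ℤ →+* MvPolynomial (Fin 0) ℤ)) := by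
      constructor
      · intro x y hxy
        simp only [RingHom.comp_apply] at hxy
        have h2 : C (R := ℤ) (σ := Fin 0) x - C y ∈ I := Ideal.Quotient.eq.mp hxy
        have hIbot : I = ⊥ := by rw [hI, Set.range_eq_empty, Ideal.span_empty]
        rw [hIbot, Ideal.mem_bot, sub_eq_zero] at h2
        exact C_injective _ _ h2
      · exact Ideal.Quotient.mk_surjective.comp (C_surjective (Fin 0))
    let e : ℤ ≃+* (MvPolynomial (Fin 0) ℤ ⧸ I) := RingEquiv.ofBijective _ hbij
    refine ⟨(Module.Basis.singleton _ ℤ).map e.toAddEquiv.toIntLinearEquiv, fun a => ?_⟩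
    rw [Module.Basis.map_apply, Module.Basis.singleton_apply]
    show e 1 = _
    have : e 1 = 1 := map_one e
    rw [this]
    simp
  | succ m ih =>
    intro k
    classical
    set J' : Ideal (MvPolynomial (Fin m) ℤ) := Ideal.span (Set.range (fun j : Fin m => qpoly m ((k+1) + (j : ℕ) + 1) (j : ℕ))) with hJ'
    obtain ⟨B', hB'⟩ := ih (k+1)
    set Q : Fin (m+1) → MvPolynomial (Fin (m+1)) ℤ :=
      fun j => qpoly (m+1) (k + (j : ℕ) + 1) (j : ℕ) with hQ
    set J : Ideal (MvPolynomial (Fin (m+1)) ℤ) := Ideal.span (Set.range Q) with hJ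
    set ψ := (MvPolynomial.finSuccEquiv ℤ m) with hψ
    set f₀ := ψ (qpoly (m+1) (k+1) 0) with hf₀def
    obtain ⟨hf₀monic, hf₀deg⟩ := qpoly_finSuccEquiv m (k+1)
    set I₁ : Ideal (Polynomial (MvPolynomial (Fin m) ℤ)) := J'.map Polynomial.C with hI₁
    set I₂ : Ideal (Polynomial (MvPolynomial (Fin m) ℤ)) := Ideal.span {f₀} with hI₂
    -- image of the ideal under ψ
    have hrangeQ : Set.range Q = insert (Q 0) (Set.range (fun j : Fin m => Q j.succ)) := by
      ext x
      constructor
      · rintro ⟨j, rfl⟩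
        cases j using Fin.cases with
        | zero => exact Set.mem_insert _ _
        | succ i => exact Set.mem_insert_of_mem _ ⟨i, rfl⟩
      · rintro (rfl | ⟨i, rfl⟩)
        · exact ⟨0, rfl⟩
        · exact ⟨i.succ, rfl⟩
    have hQ0 : Q 0 = qpoly (m+1) (k+1) 0 := by
      show qpoly (m+1) (k + ((0 : Fin (m+1)) : ℕ) + 1) ((0 : Fin (m+1)) : ℕ) = qpoly (m+1) (k+1) 0
      norm_num
    have hQsucc : ∀ j : Fin m, Q j.succ = rename Fin.succ (qpoly m ((k+1) + (j:ℕ) + 1) (j:ℕ)) := by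
      intro j
      simp only [hQ, Fin.val_succ]
      rw [← qpoly_rename]
      congr 1
      omega
    have hJmap : J.map (ψ.toRingEquiv : MvPolynomial (Fin (m+1)) ℤ →+* Polynomial (MvPolynomial (Fin m) ℤ))
        = I₁ ⊔ I₂ := by
      rw [hJ, Ideal.map_span, hrangeQ, Set.image_insert_eq, Ideal.span_insert]
      have h1 : (ψ.toRingEquiv : MvPolynomial (Fin (m+1)) ℤ →+* Polynomial (MvPolynomial (Fin m) ℤ)) (Q 0) = f₀ := by
        rw [hQ0]; rfl
      have h2 : (ψ.toRingEquiv : MvPolynomial (Fin (m+1)) ℤ →+* Polynomial (MvPolynomial (Fin m) ℤ)) ''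
          (Set.range (fun j : Fin m => Q j.succ))
          = Polynomial.C '' (Set.range (fun j : Fin m => qpoly m ((k+1) + (j:ℕ) + 1) (j:ℕ))) := by
        rw [← Set.range_comp, ← Set.range_comp]
        apply congrArg
        funext j
        show ψ (Q j.succ) = _
        rw [hQsucc j]
        exact finSuccEquiv_rename_succ m _
      rw [h1, h2, hI₁, hI₂, Ideal.map_span]
      rw [sup_comm]
    -- the chain of ring equivalences
    let E1 : (MvPolynomial (Fin (m+1)) ℤ ⧸ J) ≃+* (Polynomial (MvPolynomial (Fin m) ℤ) ⧸ (I₁ ⊔ I₂)) :=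
      Ideal.quotientEquiv J (I₁ ⊔ I₂) ψ.toRingEquiv hJmap.symm
    let E2 : (Polynomial (MvPolynomial (Fin m) ℤ) ⧸ (I₁ ⊔ I₂)) ≃+* ((Polynomial (MvPolynomial (Fin m) ℤ) ⧸ I₁) ⧸ (I₂.map (Ideal.Quotient.mk I₁))) :=
      (DoubleQuot.quotQuotEquivQuotSup I₁ I₂).symm
    let χ : (Polynomial (MvPolynomial (Fin m) ℤ) ⧸ I₁) ≃+* Polynomial (MvPolynomial (Fin m) ℤ ⧸ J') :=
      (Ideal.polynomialQuotientEquivQuotientPolynomial J').symm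
    set fbar : Polynomial (MvPolynomial (Fin m) ℤ ⧸ J') := f₀.map (Ideal.Quotient.mk J') with hfbar
    have hχmk : ∀ q : Polynomial (MvPolynomial (Fin m) ℤ), χ (Ideal.Quotient.mk I₁ q) = q.map (Ideal.Quotient.mk J') := by
      intro q
      exact Ideal.polynomialQuotientEquivQuotientPolynomial_symm_mk J' q
    have hχmap : (I₂.map (Ideal.Quotient.mk I₁)).map (χ : (Polynomial (MvPolynomial (Fin m) ℤ) ⧸ I₁) →+* Polynomial (MvPolynomial (Fin m) ℤ ⧸ J'))
        = Ideal.span {fbar} := by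
      rw [hI₂, Ideal.map_span, Ideal.map_span, Set.image_singleton, Set.image_singleton]
      simp only [RingHom.coe_coe]
      rw [hχmk]
    letI : CommRing (MvPolynomial (Fin m) ℤ ⧸ J') := Ideal.Quotient.commRing J'
    let E3 : ((Polynomial (MvPolynomial (Fin m) ℤ) ⧸ I₁) ⧸ (I₂.map (Ideal.Quotient.mk I₁)))
        ≃+* (Polynomial (MvPolynomial (Fin m) ℤ ⧸ J') ⧸ Ideal.span {fbar}) :=
      Ideal.quotientEquiv _ _ (χ : (Polynomial (MvPolynomial (Fin m) ℤ) ⧸ I₁) ≃+* Polynomial (MvPolynomial (Fin m) ℤ ⧸ J')) hχmap.symm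
    let Φ : (MvPolynomial (Fin (m+1)) ℤ ⧸ J) ≃+* AdjoinRoot fbar := (E1.trans E2).trans E3
    -- key computation of Φ on quotients of polynomials
    have hΦ : ∀ p : MvPolynomial (Fin (m+1)) ℤ,
        Φ (Ideal.Quotient.mk J p) = AdjoinRoot.mk fbar ((ψ p).map (Ideal.Quotient.mk J')) := by
      intro p
      show E3 (E2 (E1 (Ideal.Quotient.mk J p))) = _
      have e1 : E1 (Ideal.Quotient.mk J p) = Ideal.Quotient.mk (I₁ ⊔ I₂) (ψ p) :=
        Ideal.quotientEquiv_mk J (I₁ ⊔ I₂) ψ.toRingEquiv hJmap.symm p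
      have e2 : E2 (Ideal.Quotient.mk (I₁ ⊔ I₂) (ψ p))
          = Ideal.Quotient.mk _ (Ideal.Quotient.mk I₁ (ψ p)) := by
        show (DoubleQuot.quotQuotEquivQuotSup I₁ I₂).symm _ = DoubleQuot.quotQuotMk I₁ I₂ (ψ p)
        exact DoubleQuot.quotQuotEquivQuotSup_symm_quotQuotMk I₁ I₂ (ψ p)
      have e3 : E3 (Ideal.Quotient.mk (I₂.map (Ideal.Quotient.mk I₁)) (Ideal.Quotient.mk I₁ (ψ p)))
          = Ideal.Quotient.mk (Ideal.span {fbar}) (χ (Ideal.Quotient.mk I₁ (ψ p))) :=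
        Ideal.quotientEquiv_mk _ _ _ hχmap.symm _
      rw [e1, e2, e3, hχmk]
      rfl
    -- the power basis
    have hfbarMonic : fbar.Monic := hf₀monic.map _
    haveI : Nontrivial (MvPolynomial (Fin m) ℤ ⧸ J') := nontrivial_of_ne (B' ⟨fun _ => 0, fun j => by show 0 < k+1+(j:ℕ)+1; omega⟩) 0
      (Module.Basis.ne_zero B' _)
    have hfbardeg : fbar.natDegree = k + 1 := by
      rw [hfbar, hf₀monic.natDegree_map, hf₀deg]
    let pb := AdjoinRoot.powerBasis' hfbarMonic
    let BB := B'.smulTower pb.basis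
    let Φlin : (MvPolynomial (Fin (m+1)) ℤ ⧸ J) ≃ₗ[ℤ] AdjoinRoot fbar :=
      Φ.toAddEquiv.toIntLinearEquiv
    -- index equivalence
    have hdim : pb.dim = k + 1 := hfbardeg
    let Eidx : {a : Fin m → ℕ // ∀ j : Fin m, a j < (k+1) + (j : ℕ) + 1} × Fin pb.dim
        ≃ {a : Fin (m+1) → ℕ // ∀ j : Fin (m+1), a j < k + (j : ℕ) + 1} :=
      { toFun := fun p => ⟨Fin.cases (p.2 : ℕ) (fun j => p.1.1 j), by
          intro j
          cases j using Fin.cases with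
          | zero =>
            simp only [Fin.cases_zero, Fin.val_zero]
            have := p.2.2
            omega
          | succ i =>
            simp only [Fin.cases_succ, Fin.val_succ]
            have := p.1.2 i
            omega⟩,
        invFun := fun a => (⟨fun j => a.1 j.succ, fun j => by
            show a.1 j.succ < k + 1 + (j:ℕ) + 1
            have := a.2 j.succ
            simp only [Fin.val_succ] at this
            omega⟩,
          ⟨a.1 0, by rw [hdim]; have := a.2 0; simpa using this⟩),
        left_inv := by
          rintro ⟨⟨a, ha⟩, d⟩
          refine Prod.ext (Subtype.ext (funext fun j => ?_)) (Fin.ext ?_)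
          · simp
          · simp,
        right_inv := by
          rintro ⟨a, ha⟩
          refine Subtype.ext (funext fun j => ?_)
          cases j using Fin.cases with
          | zero => simp
          | succ i => simp }
    refine ⟨(BB.map Φlin.symm).reindex Eidx, ?_⟩
    rintro ⟨a, ha⟩
    rw [Module.Basis.reindex_apply, Module.Basis.map_apply]
    have hsymmEq : Eidx.symm ⟨a, ha⟩
        = (⟨fun j => a j.succ, fun j => by
            show a j.succ < k + 1 + (j:ℕ) + 1
            have := ha j.succ
            simp only [Fin.val_succ] at this
            omega⟩,
          ⟨a 0, by rw [hdim]; have := ha 0; simpa using this⟩) := rfl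
    rw [hsymmEq]
    -- compute BB at this index
    have hBB : BB (⟨fun j => a j.succ, fun j => by
            show a j.succ < k + 1 + (j:ℕ) + 1
            have := ha j.succ
            simp only [Fin.val_succ] at this
            omega⟩,
          (⟨a 0, by rw [hdim]; have := ha 0; simpa using this⟩ : Fin pb.dim))
        = Φ (Ideal.Quotient.mk J (∏ j, X j ^ a j)) := by
      rw [Module.Basis.smulTower_apply]
      rw [hB', hΦ]
      -- compute ψ of the monomial
      have hψprod : ψ (∏ j, X j ^ a j)
          = Polynomial.X ^ (a 0) * Polynomial.C (∏ j : Fin m, X j ^ a j.succ) := by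
        rw [Fin.prod_univ_succ, map_mul, map_pow, finSuccEquiv_X_zero, map_prod]
        congr 1
        rw [map_prod]
        apply Finset.prod_congr rfl
        intro j _
        rw [map_pow, finSuccEquiv_X_succ, map_pow]
      rw [hψprod, Polynomial.map_mul, Polynomial.map_pow, Polynomial.map_X, Polynomial.map_C]
      rw [map_mul, map_pow, AdjoinRoot.mk_X, AdjoinRoot.mk_C]
      rw [Algebra.smul_def, PowerBasis.basis_eq_pow]
      simp only [pb, AdjoinRoot.powerBasis'_gen]
      rw [AdjoinRoot.algebraMap_eq]
      exact mul_comm _ _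
    rw [hBB]
    exact Φ.symm_apply_apply _

lemma span_eq (n : ℕ) :
    Ideal.span ((fun a => hpoly n a n) '' Set.Icc 1 n)
      = Ideal.span (Set.range (fun j : Fin n => qpoly n (0 + (j : ℕ) + 1) (j : ℕ))) := by
  set I := Ideal.span ((fun a => hpoly n a n) '' Set.Icc 1 n) with hI
  set SQ := Ideal.span (Set.range (fun j : Fin n => qpoly n (0 + (j : ℕ) + 1) (j : ℕ))) with hSQ
  have key1 : ∀ a : ℕ, ∀ t b : ℕ, 1 ≤ a → a ≤ n → a = b + 1 + t → qpoly n a b ∈ SQ := by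
    intro a
    induction a using Nat.strong_induction_on with
    | _ a iha =>
      intro t
      induction t with
      | zero =>
        intro b h1 h2 h3
        have hb : b < n := by omega
        have : qpoly n a b = (fun j : Fin n => qpoly n (0 + (j : ℕ) + 1) (j : ℕ)) ⟨b, hb⟩ := by
          show qpoly n a b = qpoly n (0 + b + 1) b
          congr 1
          omega
        rw [this]
        exact Ideal.subset_span ⟨⟨b, hb⟩, rfl⟩
      | succ t iht =>
        intro b h1 h2 h3
        have hb : b < n := by omega
        have ha' : a = (a - 1) + 1 := by omega
        rw [ha', qpoly_rec n (a-1) b hb]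
        refine Ideal.add_mem _ ?_ ?_
        · rw [← ha']
          exact iht (b+1) h1 h2 (by omega)
        · refine Ideal.mul_mem_left _ _ ?_
          exact iha (a-1) (by omega) (a - 1 - (b+1)) b (by omega) (by omega) (by omega)
  have key2 : ∀ b : ℕ, ∀ a : ℕ, b + 1 ≤ a → a ≤ n → qpoly n a b ∈ I := by
    intro b
    induction b with
    | zero =>
      intro a h1 h2
      rw [← hpoly_eq_qpoly]
      exact Ideal.subset_span ⟨a, ⟨h1, h2⟩, rfl⟩
    | succ b ihb =>
      intro a h1 h2
      have hb : b < n := by omega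
      have ha' : a = (a - 1) + 1 := by omega
      have hrec := qpoly_rec n (a-1) b hb
      rw [← ha'] at hrec
      have : qpoly n a (b+1) = qpoly n a b - X ⟨b, hb⟩ * qpoly n (a-1) b := by
        rw [hrec]; ring
      rw [this]
      refine Ideal.sub_mem _ (ihb a (by omega) h2) ?_
      exact Ideal.mul_mem_left _ _ (ihb (a-1) (by omega) (by omega))
  apply le_antisymm
  · rw [hI, Ideal.span_le]
    rintro x ⟨a, ⟨ha1, ha2⟩, rfl⟩
    show hpoly n a n ∈ SQ
    rw [hpoly_eq_qpoly]
    exact key1 a (a - 1) 0 ha1 ha2 (by omega)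
  · rw [hSQ, Ideal.span_le]
    rintro x ⟨j, rfl⟩
    show qpoly n (0 + (j : ℕ) + 1) (j : ℕ) ∈ I
    exact key2 (j : ℕ) (0 + (j : ℕ) + 1) (by omega) (by omega)


set_option maxHeartbeats 1000000 in
/-- For every `n ≥ 1` and every permutation `σ` of the variables, the images of the
monomials `x_{σ(1)}^{a_1}⋯x_{σ(n−1)}^{a_{n−1}}` with `0 ≤ a_i ≤ n−i` form a
`ℤ`-basis of `ℤ[x_1,…,x_n]/(h_1,…,h_n)`. -/
theorem basis_quotient_hsymm_perm (n : ℕ) (hn : 1 ≤ n) (σ : Equiv.Perm (Fin n)) :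
    ∃ b : Module.Basis {a : Fin (n - 1) → ℕ // ∀ i : Fin (n - 1), a i ≤ n - 1 - (i : ℕ)} ℤ
        (MvPolynomial (Fin n) ℤ ⧸ Ideal.span ((fun a => hpoly n a n) '' Set.Icc 1 n)),
      ∀ a, b a = Ideal.Quotient.mk _
        (∏ i : Fin (n - 1), X (σ (Fin.castLE (Nat.sub_le n 1) i)) ^ a.1 i) := by
  obtain ⟨m, rfl⟩ : ∃ m, n = m + 1 := ⟨n - 1, by omega⟩
  classical
  set I := Ideal.span ((fun a => hpoly (m+1) a (m+1)) '' Set.Icc 1 (m+1)) with hIdef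
  obtain ⟨b₀, hb₀⟩ := aux (m+1) 0
  have hIJ : I = Ideal.span (Set.range (fun j : Fin (m+1) => qpoly (m+1) (0 + (j : ℕ) + 1) (j : ℕ))) :=
    span_eq (m+1)
  let e1 : (MvPolynomial (Fin (m+1)) ℤ ⧸
        Ideal.span (Set.range (fun j : Fin (m+1) => qpoly (m+1) (0 + (j : ℕ) + 1) (j : ℕ))))
      ≃+* (MvPolynomial (Fin (m+1)) ℤ ⧸ I) :=
    Ideal.quotEquivOfEq hIJ.symm
  let π : Equiv.Perm (Fin (m+1)) := Fin.revPerm.trans σ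
  let ρ := MvPolynomial.renameEquiv ℤ π
  have hmap : I.map (ρ.toRingEquiv : MvPolynomial (Fin (m+1)) ℤ →+* MvPolynomial (Fin (m+1)) ℤ) = I := by
    rw [hIdef, Ideal.map_span, ← Set.image_comp]
    congr 1
    apply Set.image_congr
    intro a _
    exact rename_hpoly (m+1) a π
  let e2 : (MvPolynomial (Fin (m+1)) ℤ ⧸ I) ≃+* (MvPolynomial (Fin (m+1)) ℤ ⧸ I) :=
    Ideal.quotientEquiv I I ρ.toRingEquiv hmap.symm
  -- index equivalence
  let F : {a : Fin (m+1-1) → ℕ // ∀ i : Fin (m+1-1), a i ≤ m + 1 - 1 - (i : ℕ)}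
      → {a : Fin (m+1) → ℕ // ∀ j : Fin (m+1), a j < 0 + (j : ℕ) + 1} := fun a =>
    ⟨fun j => if h : (j : ℕ) = 0 then 0 else a.1 ⟨m - (j : ℕ), by omega⟩, by
      intro j
      show (if h : (j : ℕ) = 0 then 0 else a.1 ⟨m - (j : ℕ), by omega⟩) < 0 + (j : ℕ) + 1
      by_cases h : (j : ℕ) = 0
      · rw [dif_pos h]
        omega
      · rw [dif_neg h]
        have hbd : a.1 ⟨m - (j : ℕ), by omega⟩ ≤ m + 1 - 1 - (m - (j : ℕ)) := a.2 _
        have hj := j.isLt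
        omega⟩
  have hFval : ∀ (b : {a : Fin (m+1-1) → ℕ // ∀ i : Fin (m+1-1), a i ≤ m + 1 - 1 - (i : ℕ)})
      (j : Fin (m+1)) (hj : ¬ (j : ℕ) = 0) (hj2 : m - (j : ℕ) < m + 1 - 1),
      (F b).1 j = b.1 ⟨m - (j : ℕ), hj2⟩ := by
    intro b j hj hj2
    rw [show (F b).1 j = (if h : (j : ℕ) = 0 then 0 else b.1 ⟨m - (j : ℕ), by omega⟩) from rfl,
      dif_neg hj]
  have hF0 : ∀ b, (F b).1 0 = 0 := fun b => rfl
  let Finv : {a : Fin (m+1) → ℕ // ∀ j : Fin (m+1), a j < 0 + (j : ℕ) + 1}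
      → {a : Fin (m+1-1) → ℕ // ∀ i : Fin (m+1-1), a i ≤ m + 1 - 1 - (i : ℕ)} := fun A =>
    ⟨fun i => A.1 ⟨m - (i : ℕ), by omega⟩, by
      intro i
      show A.1 ⟨m - (i : ℕ), by omega⟩ ≤ m + 1 - 1 - (i : ℕ)
      have hbd : A.1 ⟨m - (i : ℕ), by omega⟩ < 0 + (m - (i : ℕ)) + 1 := A.2 _
      have hi := i.isLt
      omega⟩
  have hFinvval : ∀ (B : {a : Fin (m+1) → ℕ // ∀ j : Fin (m+1), a j < 0 + (j : ℕ) + 1})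
      (i : Fin (m+1-1)) (hi2 : m - (i : ℕ) < m + 1),
      (Finv B).1 i = B.1 ⟨m - (i : ℕ), hi2⟩ := fun B i hi2 => rfl
  have hFinvF : ∀ a, Finv (F a) = a := by
    intro a
    apply Subtype.ext
    funext i
    have hi := i.isLt
    rw [hFinvval (F a) i (by omega), hFval a _ (by show ¬ (m - (i:ℕ) = 0); omega)
      (by show m - (m - (i:ℕ)) < m + 1 - 1; omega)]
    exact congrArg a.1 (Fin.ext (show m - (m - (i:ℕ)) = (i:ℕ) by omega))
  have hFFinv : ∀ A, F (Finv A) = A := by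
    intro A
    apply Subtype.ext
    funext j
    by_cases h : (j : ℕ) = 0
    · have hj0 : j = 0 := Fin.ext h
      rw [hj0, hF0]
      have := A.2 0
      simp only [Fin.val_zero] at this
      omega
    · have hj := j.isLt
      rw [hFval (Finv A) j h (by omega), hFinvval A _ (by show m - (m - (j:ℕ)) < m + 1; omega)]
      exact congrArg A.1 (Fin.ext (show m - (m - (j:ℕ)) = (j:ℕ) by omega))
  let Fequiv : {a : Fin (m+1) → ℕ // ∀ j : Fin (m+1), a j < 0 + (j : ℕ) + 1}
      ≃ {a : Fin (m+1-1) → ℕ // ∀ i : Fin (m+1-1), a i ≤ m + 1 - 1 - (i : ℕ)} :=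
    ⟨Finv, F, hFFinv, hFinvF⟩
  refine ⟨((b₀.map e1.toAddEquiv.toIntLinearEquiv).map e2.toAddEquiv.toIntLinearEquiv).reindex
    Fequiv, ?_⟩
  intro a
  rw [Module.Basis.reindex_apply, Module.Basis.map_apply, Module.Basis.map_apply]
  have hFsymm : Fequiv.symm a = F a := rfl
  rw [hFsymm, hb₀]
  change e2 (e1 (Ideal.Quotient.mk _ (∏ j, X j ^ (F a).1 j))) = _
  have he1 : e1 (Ideal.Quotient.mk _ (∏ j, X j ^ (F a).1 j))
      = Ideal.Quotient.mk I (∏ j, X j ^ (F a).1 j) :=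
    Ideal.quotEquivOfEq_mk hIJ.symm _
  rw [he1]
  have he2 : e2 (Ideal.Quotient.mk I (∏ j, X j ^ (F a).1 j))
      = Ideal.Quotient.mk I (rename π (∏ j, X j ^ (F a).1 j)) :=
    Ideal.quotientEquiv_mk I I ρ.toRingEquiv hmap.symm _
  rw [he2]
  congr 1
  rw [map_prod, Fin.prod_univ_succ]
  have h0 : (rename π) ((X (0 : Fin (m+1)) ^ (F a).1 0 : MvPolynomial (Fin (m+1)) ℤ)) = 1 := by
    rw [hF0, pow_zero, map_one]
  rw [h0, one_mul]
  have hterm : ∀ i : Fin m, (rename π) ((X (i.succ) ^ (F a).1 i.succ : MvPolynomial (Fin (m+1)) ℤ))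
      = (fun u : Fin m => X (σ (Fin.castLE (Nat.sub_le (m+1) 1) u)) ^ a.1 u) (Fin.rev i) := by
    intro i
    rw [map_pow, rename_X]
    have hi := i.isLt
    have hval : π i.succ = σ (Fin.castLE (Nat.sub_le (m+1) 1) (Fin.rev i)) := by
      show σ (Fin.rev i.succ) = _
      apply congrArg σ
      apply Fin.ext
      simp only [Fin.val_rev, Fin.coe_castLE, Fin.val_succ]
      omega
    have hexp : (F a).1 i.succ = a.1 (Fin.rev i) := by
      rw [hFval a i.succ (by simp [Fin.val_succ]) (by simp only [Fin.val_succ]; omega)]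
      apply congrArg a.1
      apply Fin.ext
      simp only [Fin.val_rev, Fin.val_succ]
      omega
    rw [hval, hexp]
  calc ∏ i : Fin m, (rename π) ((X (i.succ) ^ (F a).1 i.succ : MvPolynomial (Fin (m+1)) ℤ))
      = ∏ i : Fin m, (fun u : Fin m => X (σ (Fin.castLE (Nat.sub_le (m+1) 1) u)) ^ a.1 u)
          (Fin.rev i) := Finset.prod_congr rfl (fun i _ => hterm i)
    _ = ∏ u : Fin m, X (σ (Fin.castLE (Nat.sub_le (m+1) 1) u)) ^ a.1 u :=
        Fintype.prod_equiv Fin.revPerm _ _ (fun i => rfl)
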